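/- Let (Γ,d) be ν-regular with F-function F and let Φ be an interaction with ‖Φ‖_F < ∞. Then for any R ≥ 0: sup_{x∈Γ} Σ_{Z ∋ x, diam(Z) ≤ R} ‖Φ(Z)‖ ≤ ‖Φ‖_F ‖F‖, and if the 2ν-th moment M_{2ν}^F(0) = Σ_{n≥0}(1+n)^{2ν}F(n) is finite, then sup_{x∈Γ} Σ_{Z ∋ x, diam(Z) > R} ‖Φ(Z)‖ ≤ κ² ‖Φ‖_F Σ_{n ≥ ⌊R⌋} (1+n)^{2ν} F(n). -/

import Mathlib

open scoped ENNReal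

/-- Let `(Γ,d)` be ν-regular (with constant `κ`) with F-function `F` and
`Φ` an interaction with `‖Φ‖_F ≤ NΦ`.  Then for any `R ≥ 0`:
`sup_x ∑_{Z ∋ x, diam Z ≤ R} ‖Φ(Z)‖ ≤ NΦ ‖F‖`, and if the `2ν`-th moment
`M_{2ν}^F(0) = ∑_{n ≥ 0} (1+n)^{2ν} F(n)` is finite, then
`sup_x ∑_{Z ∋ x, diam Z > R} ‖Φ(Z)‖ ≤ κ² NΦ ∑_{n ≥ ⌊R⌋} (1+n)^{2ν} F(n)`. -/
theorem interaction_sum_bounds_by_diameter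
    {Γ : Type*} [MetricSpace Γ] [Countable Γ] {A : Type*} [NormedAddCommGroup A]
    (F : ℝ → ℝ)
    (hFpos : ∀ r : ℝ, 0 ≤ r → 0 < F r)
    (hFanti : ∀ r s : ℝ, 0 ≤ r → r ≤ s → F s ≤ F r)
    (nF cF NΦ κ ν : ℝ) (hnF : 0 ≤ nF) (hNΦ : 0 ≤ NΦ) (hκ : 0 ≤ κ) (hν : 0 < ν)
    (hFint : ∀ x : Γ, ∑' y : Γ, ENNReal.ofReal (F (dist x y)) ≤ ENNReal.ofReal nF)
    (hFconv : ∀ x y : Γ, ∑' z : Γ,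
        ENNReal.ofReal (F (dist x z)) * ENNReal.ofReal (F (dist z y))
          ≤ ENNReal.ofReal (cF * F (dist x y)))
    (hreg : ∀ (x : Γ) (n : ℕ), 1 ≤ n →
        ({y : Γ | dist x y ≤ (n : ℝ)}).encard ≤ ENNReal.ofReal (κ * (n : ℝ) ^ ν))
    (Φ : Finset Γ → A)
    (hΦ : ∀ x y : Γ, ∑' Z : {Z : Finset Γ // x ∈ Z ∧ y ∈ Z}, (‖Φ Z.1‖₊ : ℝ≥0∞)
        ≤ ENNReal.ofReal (NΦ * F (dist x y)))
    (R : ℝ) (hR : 0 ≤ R) :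
    (∀ x : Γ, ∑' Z : {Z : Finset Γ // x ∈ Z ∧ ∀ w ∈ Z, ∀ z ∈ Z, dist w z ≤ R},
        (‖Φ Z.1‖₊ : ℝ≥0∞) ≤ ENNReal.ofReal (NΦ * nF)) ∧
    ((∑' n : ℕ, ENNReal.ofReal ((1 + (n : ℝ)) ^ (2 * ν) * F n) ≠ ⊤) →
      ∀ x : Γ, ∑' Z : {Z : Finset Γ // x ∈ Z ∧ ∃ w ∈ Z, ∃ z ∈ Z, R < dist w z},
          (‖Φ Z.1‖₊ : ℝ≥0∞)
        ≤ ENNReal.ofReal (κ ^ 2 * NΦ) *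
            ∑' n : {n : ℕ // ⌊R⌋₊ ≤ n},
              ENNReal.ofReal ((1 + (n.1 : ℝ)) ^ (2 * ν) * F n.1)) := by
  classical
  constructor
  · -- Part 1
    intro x
    have hF0 : F 0 ≤ nF := by
      have h := (ENNReal.le_tsum x).trans (hFint x)
      rw [dist_self] at h
      exact (ENNReal.ofReal_le_ofReal_iff hnF).mp h
    have hinj : Function.Injective
        (fun Z : {Z : Finset Γ // x ∈ Z ∧ ∀ w ∈ Z, ∀ z ∈ Z, dist w z ≤ R} =>
          (⟨Z.1, Z.2.1, Z.2.1⟩ : {Z : Finset Γ // x ∈ Z ∧ x ∈ Z})) := by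
      intro a b h
      exact Subtype.ext (congrArg (fun t : {Z : Finset Γ // x ∈ Z ∧ x ∈ Z} => t.1) h)
    calc ∑' Z : {Z : Finset Γ // x ∈ Z ∧ ∀ w ∈ Z, ∀ z ∈ Z, dist w z ≤ R},
          (‖Φ Z.1‖₊ : ℝ≥0∞)
        ≤ ∑' Z : {Z : Finset Γ // x ∈ Z ∧ x ∈ Z}, (‖Φ Z.1‖₊ : ℝ≥0∞) :=
          ENNReal.tsum_comp_le_tsum_of_injective hinj _
      _ ≤ ENNReal.ofReal (NΦ * F (dist x x)) := hΦ x x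
      _ ≤ ENNReal.ofReal (NΦ * nF) := by
          rw [dist_self]
          exact ENNReal.ofReal_le_ofReal (mul_le_mul_of_nonneg_left hF0 hNΦ)
  · -- Part 2
    intro _ x
    -- choose a diameter-realizing pair in each Z
    have key : ∀ Z : {Z : Finset Γ // x ∈ Z ∧ ∃ w ∈ Z, ∃ z ∈ Z, R < dist w z},
        ∃ p : Γ × Γ, p.1 ∈ Z.1 ∧ p.2 ∈ Z.1 ∧ R < dist p.1 p.2 ∧
          dist x p.1 ≤ dist p.1 p.2 ∧ dist x p.2 ≤ dist p.1 p.2 := by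
      rintro ⟨Z, hx, w0, hw0, z0, hz0, hd0⟩
      obtain ⟨p, hp, hmax⟩ := Finset.exists_max_image (Z ×ˢ Z) (fun p => dist p.1 p.2)
        ⟨(w0, z0), Finset.mem_product.mpr ⟨hw0, hz0⟩⟩
      obtain ⟨hp1, hp2⟩ := Finset.mem_product.mp hp
      refine ⟨p, hp1, hp2, lt_of_lt_of_le hd0 ?_, ?_, ?_⟩
      · exact hmax (w0, z0) (Finset.mem_product.mpr ⟨hw0, hz0⟩)
      · exact hmax (x, p.1) (Finset.mem_product.mpr ⟨hx, hp1⟩)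
      · exact hmax (x, p.2) (Finset.mem_product.mpr ⟨hx, hp2⟩)
    choose pf hm1 hm2 hm3 hm4 hm5 using key
    set T := Σ n : {n : ℕ // ⌊R⌋₊ ≤ n},
      Σ p : {p : Γ × Γ // dist x p.1 ≤ (n.1 : ℝ) + 1 ∧ dist x p.2 ≤ (n.1 : ℝ) + 1 ∧
          (n.1 : ℝ) ≤ dist p.1 p.2},
      {Z : Finset Γ // p.1.1 ∈ Z ∧ p.1.2 ∈ Z} with hT
    let g : T → ℝ≥0∞ := fun t => (‖Φ t.2.2.1‖₊ : ℝ≥0∞)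
    let ι : {Z : Finset Γ // x ∈ Z ∧ ∃ w ∈ Z, ∃ z ∈ Z, R < dist w z} → T := fun Z =>
      ⟨⟨⌊dist (pf Z).1 (pf Z).2⌋₊, Nat.floor_le_floor (hm3 Z).le⟩,
        ⟨pf Z, ⟨(hm4 Z).trans (Nat.lt_floor_add_one _).le,
          (hm5 Z).trans (Nat.lt_floor_add_one _).le, Nat.floor_le dist_nonneg⟩⟩,
        ⟨Z.1, hm1 Z, hm2 Z⟩⟩
    have hι : Function.Injective ι := by
      intro a b h
      have := congrArg (fun t : T => t.2.2.1) h
      exact Subtype.ext this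
    have step1 : ∑' Z : {Z : Finset Γ // x ∈ Z ∧ ∃ w ∈ Z, ∃ z ∈ Z, R < dist w z},
        (‖Φ Z.1‖₊ : ℝ≥0∞) ≤ ∑' t : T, g t :=
      ENNReal.tsum_comp_le_tsum_of_injective hι g
    refine step1.trans ?_
    rw [ENNReal.tsum_sigma' g]
    rw [show (ENNReal.ofReal (κ ^ 2 * NΦ) *
        ∑' n : {n : ℕ // ⌊R⌋₊ ≤ n}, ENNReal.ofReal ((1 + (n.1 : ℝ)) ^ (2 * ν) * F n.1))
        = ∑' n : {n : ℕ // ⌊R⌋₊ ≤ n},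
            ENNReal.ofReal (κ ^ 2 * NΦ) * ENNReal.ofReal ((1 + (n.1 : ℝ)) ^ (2 * ν) * F n.1)
      from (ENNReal.tsum_mul_left).symm]
    refine ENNReal.tsum_le_tsum fun n => ?_
    rw [ENNReal.tsum_sigma' (fun b => g ⟨n, b⟩)]
    -- for a fixed n, bound the sum over pairs
    have hball := hreg x (n.1 + 1) (Nat.le_add_left 1 n.1)
    have hcast : ((n.1 + 1 : ℕ) : ℝ) = (n.1 : ℝ) + 1 := by push_cast; ring
    rw [hcast] at hball
    set B : Set Γ := {y : Γ | dist x y ≤ (n.1 : ℝ) + 1} with hB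
    have hFn : (0:ℝ) ≤ F n.1 := (hFpos _ (Nat.cast_nonneg _)).le
    -- innermost bound
    have inner : ∀ p : {p : Γ × Γ // dist x p.1 ≤ (n.1 : ℝ) + 1 ∧ dist x p.2 ≤ (n.1 : ℝ) + 1 ∧
          (n.1 : ℝ) ≤ dist p.1 p.2},
        ∑' Z : {Z : Finset Γ // p.1.1 ∈ Z ∧ p.1.2 ∈ Z}, (‖Φ Z.1‖₊ : ℝ≥0∞)
          ≤ ENNReal.ofReal (NΦ * F n.1) := by
      intro p
      refine (hΦ p.1.1 p.1.2).trans (ENNReal.ofReal_le_ofReal ?_)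
      exact mul_le_mul_of_nonneg_left (hFanti _ _ (Nat.cast_nonneg _) p.2.2.2) hNΦ
    calc (∑' p : {p : Γ × Γ // dist x p.1 ≤ (n.1 : ℝ) + 1 ∧ dist x p.2 ≤ (n.1 : ℝ) + 1 ∧
            (n.1 : ℝ) ≤ dist p.1 p.2},
          ∑' Z : {Z : Finset Γ // p.1.1 ∈ Z ∧ p.1.2 ∈ Z}, (‖Φ Z.1‖₊ : ℝ≥0∞))
        ≤ ∑' p : {p : Γ × Γ // dist x p.1 ≤ (n.1 : ℝ) + 1 ∧ dist x p.2 ≤ (n.1 : ℝ) + 1 ∧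
            (n.1 : ℝ) ≤ dist p.1 p.2}, ENNReal.ofReal (NΦ * F n.1) :=
          ENNReal.tsum_le_tsum inner
      _ ≤ ∑' _ : B × B, ENNReal.ofReal (NΦ * F n.1) := by
          refine ENNReal.tsum_comp_le_tsum_of_injective
            (f := fun p : {p : Γ × Γ // dist x p.1 ≤ (n.1 : ℝ) + 1 ∧
                dist x p.2 ≤ (n.1 : ℝ) + 1 ∧ (n.1 : ℝ) ≤ dist p.1 p.2} =>
              ((⟨p.1.1, p.2.1⟩, ⟨p.1.2, p.2.2.1⟩) : B × B)) ?_ _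
          intro a b h
          apply Subtype.ext
          have h1 := congrArg (fun q : (B × B) => (q.1 : Γ)) h
          have h2 := congrArg (fun q : (B × B) => (q.2 : Γ)) h
          exact Prod.ext h1 h2
      _ = (B.encard : ℝ≥0∞) * ((B.encard : ℝ≥0∞) * ENNReal.ofReal (NΦ * F n.1)) := by
          rw [ENNReal.tsum_prod']
          simp only [ENNReal.tsum_set_const]
      _ ≤ ENNReal.ofReal (κ * ((n.1 : ℝ) + 1) ^ ν) *
            (ENNReal.ofReal (κ * ((n.1 : ℝ) + 1) ^ ν) * ENNReal.ofReal (NΦ * F n.1)) := by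
          gcongr
      _ = ENNReal.ofReal (κ ^ 2 * NΦ) * ENNReal.ofReal ((1 + (n.1 : ℝ)) ^ (2 * ν) * F n.1) := by
          have h1 : (0:ℝ) < (n.1 : ℝ) + 1 := by positivity
          have hy : (0:ℝ) ≤ κ * ((n.1 : ℝ) + 1) ^ ν := by positivity
          rw [← ENNReal.ofReal_mul hy, ← ENNReal.ofReal_mul hy,
            ← ENNReal.ofReal_mul (by positivity : (0:ℝ) ≤ κ ^ 2 * NΦ)]
          congr 1
          have hr : ((n.1 : ℝ) + 1) ^ ν * ((n.1 : ℝ) + 1) ^ ν = (1 + (n.1 : ℝ)) ^ (2 * ν) := by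
            rw [← Real.rpow_add h1, show ν + ν = 2 * ν by ring, add_comm ((n.1 : ℝ)) 1]
          rw [← hr]; ring
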